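/- Let F be a finite-dimensional real inner product space, Y ⊆ F a nonempty convex set, g : F → ℝ convex, L > 0, and h : F → ℝ a concave differentiable function whose gradient is L-Lipschitz, i.e., ‖∇h(y) − ∇h(y′)‖ ≤ L‖y − y′‖ for all y, y′ ∈ F. Let ŷ ∈ Y and let y⁺ be a minimizer over Y of w ↦ g(w) − ⟨∇h(ŷ), w⟩ + (L/2)‖w − ŷ‖². Then for every ỹ ∈ Y: (h(ỹ) − g(ỹ)) − (h(y⁺) − g(y⁺)) ≤ L·‖ỹ − ŷ‖·‖y⁺ − ŷ‖. Consequently, if ‖y₁ − y₂‖ ≤ D for all y₁, y₂ ∈ Y and the supremum is attained, then sup_{y∈Y}(h(y) − g(y)) − (h(y⁺) − g(y⁺)) ≤ L·D·‖y⁺ − ŷ‖. -/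

import Mathlib

open RealInnerProductSpace

private lemma norm_add_smul_sq' {F : Type*} [NormedAddCommGroup F] [InnerProductSpace ℝ F]
    (a d : F) (t : ℝ) : ‖a + t • d‖^2 = ‖a‖^2 + 2*t*⟪a,d⟫ + t^2*‖d‖^2 := by
  rw [norm_add_sq_real, real_inner_smul_right, norm_smul, mul_pow, Real.norm_eq_abs, sq_abs]; ring

/-- First-order condition for a concave differentiable function. -/
private lemma concave_le_inner_grad {F : Type*} [NormedAddCommGroup F] [InnerProductSpace ℝ F]
    [CompleteSpace F] {h : F → ℝ} (hconc : ConcaveOn ℝ Set.univ h) (hdiff : Differentiable ℝ h)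
    (x y : F) : h y - h x ≤ ⟪gradient h x, y - x⟫ := by
  set ψ : ℝ → ℝ := h ∘ (AffineMap.lineMap x y : ℝ →ᵃ[ℝ] F) with hψ
  have hψconc : ConcaveOn ℝ Set.univ ψ := by
    have := hconc.comp_affineMap (AffineMap.lineMap x y : ℝ →ᵃ[ℝ] F)
    simpa using this
  have hline : HasDerivAt (fun t : ℝ => (AffineMap.lineMap x y : ℝ →ᵃ[ℝ] F) t) (y - x) 0 := by
    have h1 : HasDerivAt (fun t : ℝ => t • (y - x)) (y - x) 0 := by
      simpa using (hasDerivAt_id (0:ℝ)).smul_const (y - x)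
    have heq : (fun t : ℝ => (AffineMap.lineMap x y : ℝ →ᵃ[ℝ] F) t)
        = fun t : ℝ => t • (y - x) + x := by
      funext t
      rw [AffineMap.lineMap_apply_module]
      module
    rw [heq]
    exact h1.add_const x
  have hF : HasFDerivAt h (InnerProductSpace.toDual ℝ F (gradient h x)) x :=
    (hdiff x).hasGradientAt.hasFDerivAt
  have hF0 : HasFDerivAt h (InnerProductSpace.toDual ℝ F (gradient h x))
      ((AffineMap.lineMap x y : ℝ →ᵃ[ℝ] F) 0) := by simpa using hF
  have hd : HasDerivAt ψ ⟪gradient h x, y - x⟫ 0 := by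
    have := hF0.comp_hasDerivAt 0 hline
    simpa [InnerProductSpace.toDual_apply_apply] using this
  have hslope := hψconc.slope_le_of_hasDerivAt (Set.mem_univ 0) (Set.mem_univ 1)
    one_pos hd
  have : slope ψ 0 1 = h y - h x := by
    simp [slope_def_field, hψ]
  linarith [hslope, this.symm.le, this.le]

/-- Descent-type bound from a Lipschitz gradient (with constant `L` instead of `L/2`). -/
private lemma descent_bound {F : Type*} [NormedAddCommGroup F] [InnerProductSpace ℝ F]
    [CompleteSpace F] {h : F → ℝ} (hdiff : Differentiable ℝ h) {L : ℝ} (hL : 0 ≤ L)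
    (hlip : ∀ y y' : F, ‖gradient h y - gradient h y'‖ ≤ L * ‖y - y'‖) (x y : F) :
    h x + ⟪gradient h x, y - x⟫ - h y ≤ L * ‖y - x‖ ^ 2 := by
  set a := gradient h x with ha
  set f : F → ℝ := fun w => h w - ⟪a, w⟫ with hf
  set s : Set F := segment ℝ x y with hs
  have key : ‖f y - f x‖ ≤ (L * ‖y - x‖) * ‖y - x‖ := by
    apply Convex.norm_image_sub_le_of_norm_hasFDerivWithin_le
      (f' := fun z => (InnerProductSpace.toDual ℝ F (gradient h z - a) : F →L[ℝ] ℝ))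
    · intro z hz
      have h1 : HasFDerivAt h (InnerProductSpace.toDual ℝ F (gradient h z)) z :=
        (hdiff z).hasGradientAt.hasFDerivAt
      have h2 : HasFDerivAt (fun w => ⟪a, w⟫) ((InnerProductSpace.toDual ℝ F a : F →L[ℝ] ℝ)) z :=
        (InnerProductSpace.toDual ℝ F a).hasFDerivAt
      have := (h1.sub h2).hasFDerivWithinAt (s := s)
      rw [show f = h - fun w => ⟪a, w⟫ from rfl]
      simpa [map_sub] using this
    · intro z hz
      rw [LinearIsometryEquiv.norm_map]
      obtain ⟨u, v, hu, hv, huv, rfl⟩ := hz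
      have hz' : u • x + v • y - x = v • (y - x) := by
        have : u = 1 - v := by linarith
        subst this
        simp [smul_sub, sub_smul, one_smul]; abel
      calc ‖gradient h (u • x + v • y) - a‖ ≤ L * ‖u • x + v • y - x‖ := hlip _ _
        _ = L * (v * ‖y - x‖) := by rw [hz', norm_smul, Real.norm_eq_abs, abs_of_nonneg hv]
        _ ≤ L * ‖y - x‖ := by
            nlinarith [mul_nonneg (mul_nonneg hL (norm_nonneg (y - x)))
              (by linarith : (0:ℝ) ≤ 1 - v)]
    · exact convex_segment x y
    · exact left_mem_segment ℝ x y
    · exact right_mem_segment ℝ x y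
  have habs : |f y - f x| ≤ L * ‖y - x‖ ^ 2 := by
    rw [← Real.norm_eq_abs]
    calc ‖f y - f x‖ ≤ (L * ‖y - x‖) * ‖y - x‖ := key
      _ = L * ‖y - x‖ ^ 2 := by ring
  have h1 := abs_le.mp habs
  have h2 : ⟪a, y - x⟫ = ⟪a, y⟫ - ⟪a, x⟫ := inner_sub_right a y x
  simp only [hf] at h1
  linarith [h1.1, h1.2]

/-- Proximal-gradient gap bound for a concave smooth `h` minus convex `g`:
if `y⁺` minimizes `w ↦ g(w) − ⟨∇h(ŷ), w⟩ + (L/2)‖w − ŷ‖²` over `Y`, then for all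
`ỹ ∈ Y`, `(h(ỹ) − g(ỹ)) − (h(y⁺) − g(y⁺)) ≤ L‖ỹ − ŷ‖‖y⁺ − ŷ‖`; and when `Y` has
diameter ≤ D and the supremum is attained,
`sup_{y∈Y}(h − g) − (h(y⁺) − g(y⁺)) ≤ L·D·‖y⁺ − ŷ‖`. -/
theorem concave_prox_grad_gap
    {F : Type*} [NormedAddCommGroup F] [InnerProductSpace ℝ F] [FiniteDimensional ℝ F]
    (Y : Set F) (hYne : Y.Nonempty) (hYconv : Convex ℝ Y)
    (g h : F → ℝ) (hg : ConvexOn ℝ Set.univ g)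
    (L : ℝ) (hL : 0 < L)
    (hconc : ConcaveOn ℝ Set.univ h) (hdiff : Differentiable ℝ h)
    (hlip : ∀ y y' : F, ‖gradient h y - gradient h y'‖ ≤ L * ‖y - y'‖)
    (yhat : F) (hyhatY : yhat ∈ Y)
    (yplus : F) (hyplusY : yplus ∈ Y)
    (hyplus : IsMinOn (fun w => g w - ⟪gradient h yhat, w⟫ + L / 2 * ‖w - yhat‖ ^ 2)
      Y yplus) :
    (∀ ytil ∈ Y,
      (h ytil - g ytil) - (h yplus - g yplus) ≤ L * ‖ytil - yhat‖ * ‖yplus - yhat‖) ∧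
    ∀ D : ℝ, (∀ y₁ ∈ Y, ∀ y₂ ∈ Y, ‖y₁ - y₂‖ ≤ D) →
      ∀ ymax ∈ Y, IsMaxOn (fun y => h y - g y) Y ymax →
        (h ymax - g ymax) - (h yplus - g yplus) ≤ L * D * ‖yplus - yhat‖ := by
  set a := gradient h yhat with ha
  have hL0 : 0 ≤ L := hL.le
  -- variational inequality at the minimizer
  have key : ∀ w ∈ Y, g yplus ≤ g w - ⟪a, w - yplus⟫ + L * ⟪yplus - yhat, w - yplus⟫ := by
    intro w hw
    have hc0 : 0 ≤ L / 2 * ‖w - yplus‖ ^ 2 := by positivity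
    apply le_of_forall_pos_le_add
    intro ε hε
    set t := min 1 (ε / (L / 2 * ‖w - yplus‖ ^ 2 + 1)) with htdef
    have ht0 : 0 < t := lt_min one_pos (by positivity)
    have ht1 : t ≤ 1 := min_le_left _ _
    have hzmem : (1 - t) • yplus + t • w ∈ Y :=
      hYconv hyplusY hw (by linarith) ht0.le (by ring)
    have hmin := isMinOn_iff.mp hyplus _ hzmem
    have hconvg := hg.2 (Set.mem_univ yplus) (Set.mem_univ w)
      (by linarith : (0:ℝ) ≤ 1 - t) ht0.le (by ring)
    simp only [smul_eq_mul] at hconvg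
    have hnorm : ‖(1 - t) • yplus + t • w - yhat‖ ^ 2
        = ‖yplus - yhat‖^2 + 2*t*⟪yplus - yhat, w - yplus⟫ + t^2*‖w - yplus‖^2 := by
      rw [show (1 - t) • yplus + t • w - yhat = (yplus - yhat) + t • (w - yplus) by module]
      exact norm_add_smul_sq' _ _ _
    have hinner : ⟪a, (1 - t) • yplus + t • w⟫ = ⟪a, yplus⟫ + t * ⟪a, w - yplus⟫ := by
      rw [show (1 - t) • yplus + t • w = yplus + t • (w - yplus) by module,
        inner_add_right, real_inner_smul_right]
    rw [hnorm, hinner] at hmin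
    have hmul : t * (g yplus) ≤ t * (g w - ⟪a, w - yplus⟫ + L * ⟪yplus - yhat, w - yplus⟫
        + t * (L / 2 * ‖w - yplus‖ ^ 2)) := by nlinarith [hmin, hconvg]
    have hdiv := le_of_mul_le_mul_left hmul ht0
    have htc : t * (L / 2 * ‖w - yplus‖ ^ 2) ≤ ε := by
      have h1 : t ≤ ε / (L / 2 * ‖w - yplus‖ ^ 2 + 1) := min_le_right _ _
      have h2 : t * (L / 2 * ‖w - yplus‖ ^ 2)
          ≤ (ε / (L / 2 * ‖w - yplus‖ ^ 2 + 1)) * (L / 2 * ‖w - yplus‖ ^ 2) :=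
        mul_le_mul_of_nonneg_right h1 hc0
      have h3 : (ε / (L / 2 * ‖w - yplus‖ ^ 2 + 1)) * (L / 2 * ‖w - yplus‖ ^ 2) ≤ ε := by
        rw [div_mul_eq_mul_div, div_le_iff₀ (by linarith)]
        nlinarith
      linarith
    linarith
  have main : ∀ ytil ∈ Y,
      (h ytil - g ytil) - (h yplus - g yplus) ≤ L * ‖ytil - yhat‖ * ‖yplus - yhat‖ := by
    intro ytil htY
    have s1 := concave_le_inner_grad hconc hdiff yhat ytil
    have s2 := descent_bound hdiff hL0 hlip yhat yplus
    have s3 := key ytil htY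
    have e1 : ⟪a, ytil - yhat⟫ = ⟪a, ytil - yplus⟫ + ⟪a, yplus - yhat⟫ := by
      rw [← inner_add_right]; congr 1; abel
    have e2 : ⟪yplus - yhat, ytil - yplus⟫ + ‖yplus - yhat‖^2
        = ⟪yplus - yhat, ytil - yhat⟫ := by
      rw [← real_inner_self_eq_norm_sq, ← inner_add_right]; congr 1; abel
    have he2 : L * ⟪yplus - yhat, ytil - yplus⟫ + L * ‖yplus - yhat‖^2
        = L * ⟪yplus - yhat, ytil - yhat⟫ := by rw [← e2]; ring
    have hcs : L * ⟪yplus - yhat, ytil - yhat⟫ ≤ L * ‖ytil - yhat‖ * ‖yplus - yhat‖ := by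
      have h4 := real_inner_le_norm (yplus - yhat) (ytil - yhat)
      nlinarith
    linarith
  refine ⟨main, ?_⟩
  intro D hD ymax hymaxY _
  have hb := main ymax hymaxY
  have hDy := hD ymax hymaxY yhat hyhatY
  have h5 : L * ‖ymax - yhat‖ ≤ L * D := mul_le_mul_of_nonneg_left hDy hL0
  have h6 := mul_le_mul_of_nonneg_right h5 (norm_nonneg (yplus - yhat))
  linarith
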